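/- Fix a dataset S = (z_1,…,z_n) and let f : ℝ^d × Z → ℝ be such that each f(·; z_i) is L-Lipschitz and β-smooth, and R_S(w) = (1/n)Σ_{i=1}^n f(w; z_i) attains a minimum at some w*_S. Run the stochastic gradient method (SGM, no momentum) for T steps with constant learning rate 0 < α < 2: w_{t+1} = w_t − α∇_w f(w_t; z_{i_t}) with i.i.d. uniform indices i_t ∈ {1,…,n}. Then min_{t=0,…,T} E_A[‖∇R_S(w_t)‖²] ≤ W / ( (T+1)·(α − α²/2) ) + βα²L² / (2α − α²), where W = E_A[R_S(w_0) − R_S(w*_S)]. -/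

import Mathlib

open scoped BigOperators
open scoped RealInnerProductSpace

section AuxGrad
variable {F : Type*} [NormedAddCommGroup F] [InnerProductSpace ℝ F] [CompleteSpace F]

lemma sgm_inner_gradient_eq {h : F → ℝ} (x y : F) :
    ⟪gradient h x, y⟫ = fderiv ℝ h x y := by
  simp [gradient, InnerProductSpace.toDual_symm_apply]

lemma sgm_norm_gradient_eq (h : F → ℝ) (x : F) : ‖gradient h x‖ = ‖fderiv ℝ h x‖ := by
  simp [gradient]

lemma sgm_grad_norm_le {h : F → ℝ} {L : ℝ} (hL : 0 ≤ L)
    (hlip : ∀ u v, |h u - h v| ≤ L * ‖u - v‖) (x : F) : ‖gradient h x‖ ≤ L := by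
  rw [sgm_norm_gradient_eq]
  have hlw : LipschitzWith L.toNNReal h := by
    apply LipschitzWith.of_dist_le_mul
    intro u v
    rw [Real.dist_eq, Real.coe_toNNReal _ hL, dist_eq_norm]
    exact hlip u v
  simpa [Real.coe_toNNReal _ hL] using norm_fderiv_le_of_lipschitz ℝ hlw (x₀ := x)

lemma sgm_descent {h : F → ℝ} {β : ℝ} (hβ : 0 ≤ β) (hd : Differentiable ℝ h)
    (hs : ∀ u v, ‖gradient h u - gradient h v‖ ≤ β * ‖u - v‖) (u v : F) :
    h v ≤ h u + ⟪gradient h u, v - u⟫ + β / 2 * ‖v - u‖ ^ 2 := by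
  set Δ := v - u with hΔ
  set γ : ℝ → F := fun t => u + t • Δ with hγ
  have hγd : ∀ t : ℝ, HasDerivAt γ Δ t := by
    intro t
    have := ((hasDerivAt_id t).smul_const Δ).const_add u
    simpa [γ] using this
  set D : ℝ → ℝ := fun t => ⟪gradient h (γ t), Δ⟫ with hD
  have hder : ∀ t : ℝ, HasDerivAt (fun s => h (γ s)) (D t) t := by
    intro t
    have h2 := (hd (γ t)).hasFDerivAt.comp_hasDerivAt t (hγd t)
    have : fderiv ℝ h (γ t) Δ = D t := (sgm_inner_gradient_eq _ _).symm
    rw [← this]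
    exact h2
  have hgradlip : LipschitzWith β.toNNReal (gradient h) := by
    apply LipschitzWith.of_dist_le_mul
    intro a b
    rw [dist_eq_norm, dist_eq_norm, Real.coe_toNNReal _ hβ]
    exact hs a b
  have hγc : Continuous γ := by fun_prop
  have hDc : Continuous D := by
    exact (hgradlip.continuous.comp hγc).inner continuous_const
  have hint : h (γ 1) - h (γ 0) = ∫ t in (0:ℝ)..1, D t := by
    rw [intervalIntegral.integral_eq_sub_of_hasDerivAt (fun t _ => hder t)
      (hDc.intervalIntegrable 0 1)]
  have hbound : ∀ t ∈ Set.Icc (0:ℝ) 1, D t ≤ ⟪gradient h u, Δ⟫ + β * ‖Δ‖ ^ 2 * t := by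
    intro t ht
    have key : D t - ⟪gradient h u, Δ⟫ = ⟪gradient h (γ t) - gradient h u, Δ⟫ := by
      simp [D, inner_sub_left]
    have h1 : ⟪gradient h (γ t) - gradient h u, Δ⟫ ≤ ‖gradient h (γ t) - gradient h u‖ * ‖Δ‖ :=
      real_inner_le_norm _ _
    have h2 : ‖gradient h (γ t) - gradient h u‖ ≤ β * (t * ‖Δ‖) := by
      have := hs (γ t) u
      simpa [γ, norm_smul, abs_of_nonneg ht.1] using this
    nlinarith [norm_nonneg Δ, key, mul_le_mul_of_nonneg_right h2 (norm_nonneg Δ)]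
  have hmono : (∫ t in (0:ℝ)..1, D t)
      ≤ ∫ t in (0:ℝ)..1, (⟪gradient h u, Δ⟫ + β * ‖Δ‖ ^ 2 * t) := by
    apply intervalIntegral.integral_mono_on (by norm_num) (hDc.intervalIntegrable 0 1)
    · exact (Continuous.intervalIntegrable (by continuity) 0 1)
    · exact hbound
  have hcomp : (∫ t in (0:ℝ)..1, (⟪gradient h u, Δ⟫ + β * ‖Δ‖ ^ 2 * t))
      = ⟪gradient h u, Δ⟫ + β / 2 * ‖Δ‖ ^ 2 := by
    rw [intervalIntegral.integral_add (intervalIntegrable_const)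
      ((intervalIntegral.intervalIntegrable_id).const_mul _)]
    rw [intervalIntegral.integral_const_mul, integral_id]
    norm_num
    ring
  have hγ1 : γ 1 = v := by simp [γ, Δ]
  have hγ0 : γ 0 = u := by simp [γ]
  rw [hγ1, hγ0] at hint
  linarith [hint, hmono, hcomp.le, hcomp.ge]

end AuxGrad

lemma sgm_sum_update {M : Type*} [AddCommMonoid M] {T n : ℕ} (t : Fin T)
    (F : (Fin T → Fin n) → M) :
    ∑ idx : Fin T → Fin n, ∑ j : Fin n, F (Function.update idx t j)
      = n • ∑ idx : Fin T → Fin n, F idx := by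
  classical
  let e := Equiv.funSplitAt t (Fin n)
  have key : ∀ (p : Fin n × ({ j // j ≠ t } → Fin n)) (j : Fin n),
      Function.update (e.symm p) t j = e.symm (j, p.2) := by
    intro p j; funext x
    by_cases hx : x = t
    · subst hx
      simp [e, Equiv.funSplitAt, Equiv.piSplitAt, Function.update]
    · simp [e, Equiv.funSplitAt, Equiv.piSplitAt, Function.update, hx]
  have h1 : ∑ idx : Fin T → Fin n, ∑ j : Fin n, F (Function.update idx t j)
      = ∑ p : Fin n × ({ j // j ≠ t } → Fin n), ∑ j : Fin n, F (Function.update (e.symm p) t j) :=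
    (e.symm.sum_comp _).symm
  have h2 : ∑ idx : Fin T → Fin n, F idx
      = ∑ p : Fin n × ({ j // j ≠ t } → Fin n), F (e.symm p) :=
    (e.symm.sum_comp _).symm
  rw [h1, h2]
  rw [Fintype.sum_prod_type, Fintype.sum_prod_type]
  simp only [key]
  rw [Finset.sum_const, Finset.card_univ, Fintype.card_fin]
  congr 1
  exact Finset.sum_comm


/-- Convergence bound for plain SGM (no momentum) with constant learning rate
`0 < α < 2` on a smooth Lipschitz loss: bound on the minimum expected squared
gradient norm of the empirical risk. -/
theorem stmt_6 {d n T : ℕ} (hn : 0 < n) (hT : 1 ≤ T) {Z : Type*}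
    (f : EuclideanSpace ℝ (Fin d) → Z → ℝ) (S : Fin n → Z)
    (L β α : ℝ)
    (hL : 0 < L) (hβ : 0 < β)
    (hα0 : 0 < α) (hα : α < 2)
    (hlip : ∀ i u v, |f u (S i) - f v (S i)| ≤ L * ‖u - v‖)
    (hdiff : ∀ i, Differentiable ℝ (fun v => f v (S i)))
    (hsm : ∀ i u v, ‖gradient (fun v => f v (S i)) u - gradient (fun v => f v (S i)) v‖
      ≤ β * ‖u - v‖)
    (RS : EuclideanSpace ℝ (Fin d) → ℝ)
    (hRS : ∀ v, RS v = (1 / (n : ℝ)) * ∑ i, f v (S i))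
    (wstar : EuclideanSpace ℝ (Fin d)) (hwstar : ∀ v, RS wstar ≤ RS v)
    (w0 : EuclideanSpace ℝ (Fin d))
    (w : (Fin T → Fin n) → ℕ → EuclideanSpace ℝ (Fin d))
    (hw0 : ∀ idx, w idx 0 = w0)
    (hrec : ∀ idx (t : Fin T),
      w idx ((t : ℕ) + 1) = w idx (t : ℕ)
        - α • gradient (fun v => f v (S (idx t))) (w idx (t : ℕ))) :
    ∃ t ≤ T,
      (∑ idx : Fin T → Fin n, ‖gradient RS (w idx t)‖ ^ 2) / (n : ℝ) ^ T ≤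
        ((∑ idx : Fin T → Fin n, (RS (w idx 0) - RS wstar)) / (n : ℝ) ^ T)
          / (((T : ℝ) + 1) * (α - α ^ 2 / 2))
        + β * α ^ 2 * L ^ 2 / (2 * α - α ^ 2) := by
  classical
  have hn' : (0 : ℝ) < n := by exact_mod_cast hn
  set gi : Fin n → EuclideanSpace ℝ (Fin d) → EuclideanSpace ℝ (Fin d) := fun i x => gradient (fun v => f v (S i)) x with hgi
  set G : EuclideanSpace ℝ (Fin d) → EuclideanSpace ℝ (Fin d) := fun x => (n : ℝ)⁻¹ • ∑ i, gi i x with hG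
  -- gradient of RS
  have hHG : ∀ x, HasGradientAt RS (G x) x := by
    intro x
    have h1 : ∀ i : Fin n, HasFDerivAt (fun v => f v (S i))
        (InnerProductSpace.toDual ℝ (EuclideanSpace ℝ (Fin d)) (gi i x)) x :=
      fun i => ((hdiff i) x).hasGradientAt.hasFDerivAt
    have h2 : HasFDerivAt (fun v => ∑ i, f v (S i))
        (∑ i, InnerProductSpace.toDual ℝ (EuclideanSpace ℝ (Fin d)) (gi i x)) x :=
      HasFDerivAt.fun_sum (fun i _ => h1 i)
    have h3 := h2.const_mul (1 / (n : ℝ))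
    have h4 : RS = fun v => (1 / (n : ℝ)) * ∑ i, f v (S i) := funext hRS
    rw [← h4] at h3
    have h5 := h3.hasGradientAt
    have h6 : (InnerProductSpace.toDual ℝ (EuclideanSpace ℝ (Fin d))).symm
        ((1 / (n : ℝ)) • ∑ i, InnerProductSpace.toDual ℝ (EuclideanSpace ℝ (Fin d)) (gi i x)) = G x := by
      simp [hG, map_sum, one_div]
    rwa [h6] at h5
  have hgradRS : ∀ x, gradient RS x = G x := fun x => (hHG x).gradient
  have hRSdiff : Differentiable ℝ RS := fun x => (hHG x).differentiableAt
  -- G is β-Lipschitz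
  have hGlip : ∀ u v, ‖G u - G v‖ ≤ β * ‖u - v‖ := by
    intro u v
    have h1 : G u - G v = (n : ℝ)⁻¹ • ∑ i, (gi i u - gi i v) := by
      rw [hG]; dsimp only; rw [← smul_sub, ← Finset.sum_sub_distrib]
    rw [h1, norm_smul]
    have h2 : ‖∑ i : Fin n, (gi i u - gi i v)‖ ≤ (n : ℝ) * (β * ‖u - v‖) := by
      refine (norm_sum_le _ _).trans ?_
      calc ∑ i : Fin n, ‖gi i u - gi i v‖ ≤ ∑ _i : Fin n, β * ‖u - v‖ :=
            Finset.sum_le_sum (fun i _ => hsm i u v)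
        _ = (n : ℝ) * (β * ‖u - v‖) := by
            simp [Finset.sum_const, nsmul_eq_mul]
    calc ‖(n:ℝ)⁻¹‖ * ‖∑ i : Fin n, (gi i u - gi i v)‖
        ≤ (n:ℝ)⁻¹ * ((n : ℝ) * (β * ‖u - v‖)) := by
          rw [Real.norm_eq_abs, abs_of_pos (inv_pos.2 hn')]
          exact mul_le_mul_of_nonneg_left h2 (inv_pos.2 hn').le
      _ = β * ‖u - v‖ := by field_simp
  have hginorm : ∀ i x, ‖gi i x‖ ≤ L := fun i x => sgm_grad_norm_le hL.le (hlip i) x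
  have hGnorm : ∀ x, ‖G x‖ ≤ L := by
    intro x
    rw [hG]; dsimp only
    rw [norm_smul, Real.norm_eq_abs, abs_of_pos (inv_pos.2 hn')]
    have h2 : ‖∑ i : Fin n, gi i x‖ ≤ (n : ℝ) * L := by
      refine (norm_sum_le _ _).trans ?_
      calc ∑ i : Fin n, ‖gi i x‖ ≤ ∑ _i : Fin n, L := Finset.sum_le_sum (fun i _ => hginorm i x)
        _ = (n : ℝ) * L := by simp [Finset.sum_const, nsmul_eq_mul]
    calc (n:ℝ)⁻¹ * ‖∑ i : Fin n, gi i x‖ ≤ (n:ℝ)⁻¹ * ((n:ℝ) * L) :=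
          mul_le_mul_of_nonneg_left h2 (inv_pos.2 hn').le
      _ = L := by field_simp
  -- descent lemma for RS
  have hRSsm : ∀ u v, ‖gradient RS u - gradient RS v‖ ≤ β * ‖u - v‖ := by
    intro u v; rw [hgradRS, hgradRS]; exact hGlip u v
  have hdesc : ∀ u v : EuclideanSpace ℝ (Fin d), RS v ≤ RS u + ⟪G u, v - u⟫ + β / 2 * ‖v - u‖ ^ 2 := by
    intro u v
    have := sgm_descent hβ.le hRSdiff hRSsm u v
    rwa [hgradRS] at this
  -- PL-type inequality
  have hPL : ∀ x : EuclideanSpace ℝ (Fin d), ‖G x‖ ^ 2 ≤ 2 * β * (RS x - RS wstar) := by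
    intro x
    have h1 := hwstar (x - β⁻¹ • G x)
    have h2 := hdesc x (x - β⁻¹ • G x)
    have e1 : (x - β⁻¹ • G x) - x = -(β⁻¹ • G x) := by abel
    rw [e1] at h2
    have e2 : ⟪G x, -(β⁻¹ • G x)⟫ = -(β⁻¹ * ‖G x‖ ^ 2) := by
      rw [inner_neg_right, real_inner_smul_right, real_inner_self_eq_norm_sq]
    have e3 : ‖-(β⁻¹ • G x)‖ ^ 2 = β⁻¹ ^ 2 * ‖G x‖ ^ 2 := by
      rw [norm_neg, norm_smul, Real.norm_eq_abs, abs_of_pos (inv_pos.2 hβ), mul_pow]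
    rw [e2, e3] at h2
    have hβ0 : β ≠ 0 := ne_of_gt hβ
    have h3 : RS wstar ≤ RS x - ‖G x‖ ^ 2 / (2 * β) := by
      have : -(β⁻¹ * ‖G x‖ ^ 2) + β / 2 * (β⁻¹ ^ 2 * ‖G x‖ ^ 2) = -(‖G x‖^2 / (2*β)) := by
        field_simp; ring
      linarith [h1, h2, this.le, this.ge]
    have h4 : ‖G x‖ ^ 2 / (2 * β) ≤ RS x - RS wstar := by linarith
    calc ‖G x‖ ^ 2 = (‖G x‖ ^ 2 / (2 * β)) * (2 * β) := by field_simp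
      _ ≤ (RS x - RS wstar) * (2 * β) := mul_le_mul_of_nonneg_right h4 (by positivity)
      _ = 2 * β * (RS x - RS wstar) := by ring
  -- dependence of w idx s on idx only below s
  have hdep : ∀ s : ℕ, s ≤ T → ∀ idx idx' : Fin T → Fin n,
      (∀ k : Fin T, (k : ℕ) < s → idx k = idx' k) → w idx s = w idx' s := by
    intro s
    induction s with
    | zero => intro _ idx idx' _; rw [hw0, hw0]
    | succ s ih =>
      intro hsT idx idx' hk
      have hsT' : s < T := Nat.lt_of_succ_le hsT
      have h1 : w idx s = w idx' s :=
        ih (le_of_lt hsT') idx idx' (fun k hk' => hk k (Nat.lt_succ_of_lt hk'))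
      have h2 : idx ⟨s, hsT'⟩ = idx' ⟨s, hsT'⟩ := hk ⟨s, hsT'⟩ (Nat.lt_succ_self s)
      have e1 := hrec idx ⟨s, hsT'⟩
      have e2 := hrec idx' ⟨s, hsT'⟩
      simp only [Fin.val_mk] at e1 e2
      rw [e1, e2, h1, h2]
  have hwup : ∀ (idx : Fin T → Fin n) (t : Fin T) (j : Fin n),
      w (Function.update idx t j) (t : ℕ) = w idx (t : ℕ) := by
    intro idx t j
    refine hdep (t : ℕ) (le_of_lt t.isLt) _ _ (fun k hk => ?_)
    have hkt : k ≠ t := by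
      intro h; rw [h] at hk; exact lt_irrefl _ hk
    rw [Function.update_of_ne hkt]
  -- key expectation identity
  have hkey : ∀ t : Fin T,
      ∑ idx : Fin T → Fin n, ⟪G (w idx (t : ℕ)), gi (idx t) (w idx (t : ℕ))⟫
        = ∑ idx : Fin T → Fin n, ‖G (w idx (t : ℕ))‖ ^ 2 := by
    intro t
    have hsum := sgm_sum_update t
      (fun idx => ⟪G (w idx (t : ℕ)), gi (idx t) (w idx (t : ℕ))⟫)
    have hL1 : ∀ idx : Fin T → Fin n, ∀ j : Fin n,
        ⟪G (w (Function.update idx t j) (t : ℕ)),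
          gi (Function.update idx t j t) (w (Function.update idx t j) (t : ℕ))⟫
        = ⟪G (w idx (t : ℕ)), gi j (w idx (t : ℕ))⟫ := by
      intro idx j
      rw [hwup idx t j, Function.update_self]
    have hL2 : ∀ idx : Fin T → Fin n,
        ∑ j : Fin n, ⟪G (w idx (t : ℕ)), gi j (w idx (t : ℕ))⟫
          = (n : ℝ) * ‖G (w idx (t : ℕ))‖ ^ 2 := by
      intro idx
      rw [← inner_sum]
      have : ∑ j : Fin n, gi j (w idx (t : ℕ)) = (n : ℝ) • G (w idx (t : ℕ)) := by
        rw [hG]; dsimp only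
        rw [smul_smul, mul_inv_cancel₀ (ne_of_gt hn'), one_smul]
      rw [this, real_inner_smul_right, real_inner_self_eq_norm_sq]
    have hsum2 : ∑ idx : Fin T → Fin n, (n : ℝ) * ‖G (w idx (t : ℕ))‖ ^ 2
        = (n : ℕ) • ∑ idx : Fin T → Fin n,
            ⟪G (w idx (t : ℕ)), gi (idx t) (w idx (t : ℕ))⟫ := by
      rw [← hsum]
      refine Finset.sum_congr rfl (fun idx _ => ?_)
      rw [← hL2 idx]
      exact Finset.sum_congr rfl (fun j _ => (hL1 idx j).symm)
    rw [← Finset.mul_sum, nsmul_eq_mul] at hsum2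
    exact (mul_left_cancel₀ (ne_of_gt hn') hsum2.symm)
  -- setup quantities
  set Ncard : ℝ := ((n : ℝ)) ^ T with hNcard
  have hNpos : 0 < Ncard := by positivity
  set c0 : ℝ := β * α ^ 2 * L ^ 2 / 2 with hc0
  have hc0n : 0 ≤ c0 := by rw [hc0]; positivity
  set P : ℕ → ℝ := fun s => ∑ idx : Fin T → Fin n, RS (w idx s) with hP
  set Ee : ℕ → ℝ := fun s => ∑ idx : Fin T → Fin n, ‖G (w idx s)‖ ^ 2 with hE
  have hcardsum : ∀ c : ℝ, (∑ _idx : Fin T → Fin n, c) = Ncard * c := by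
    intro c
    rw [Finset.sum_const, Finset.card_univ, hNcard]
    simp [Fintype.card_fun, nsmul_eq_mul]
  have hEnn : ∀ s : ℕ, 0 ≤ Ee s := by
    intro s
    simp only [hE]
    exact Finset.sum_nonneg (fun idx _ => by positivity)
  -- per-step inequality
  have hstep : ∀ t : Fin T, α * Ee (t : ℕ) ≤ P (t : ℕ) - P ((t : ℕ) + 1) + Ncard * c0 := by
    intro t
    have hpt : ∀ idx : Fin T → Fin n,
        RS (w idx ((t : ℕ) + 1)) ≤ RS (w idx (t : ℕ))
          - α * ⟪G (w idx (t : ℕ)), gi (idx t) (w idx (t : ℕ))⟫ + c0 := by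
      intro idx
      have hd1 := hdesc (w idx (t : ℕ)) (w idx ((t : ℕ) + 1))
      have e0 : w idx ((t : ℕ) + 1) - w idx (t : ℕ)
          = -(α • gi (idx t) (w idx (t : ℕ))) := by
        rw [hrec idx t]; exact sub_sub_cancel_left _ _
      rw [e0] at hd1
      have e2 : ⟪G (w idx (t : ℕ)), -(α • gi (idx t) (w idx (t : ℕ)))⟫
          = -(α * ⟪G (w idx (t : ℕ)), gi (idx t) (w idx (t : ℕ))⟫) := by
        rw [inner_neg_right, real_inner_smul_right]
      rw [e2] at hd1
      have e3 : ‖-(α • gi (idx t) (w idx (t : ℕ)))‖ ^ 2 ≤ α ^ 2 * L ^ 2 := by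
        rw [norm_neg, norm_smul, Real.norm_eq_abs, abs_of_pos hα0, mul_pow]
        exact mul_le_mul_of_nonneg_left
          (pow_le_pow_left₀ (norm_nonneg _) (hginorm _ _) 2) (by positivity)
      have e4 : β / 2 * ‖-(α • gi (idx t) (w idx (t : ℕ)))‖ ^ 2 ≤ c0 := by
        rw [hc0]
        calc β / 2 * ‖-(α • gi (idx t) (w idx (t : ℕ)))‖ ^ 2
            ≤ β / 2 * (α ^ 2 * L ^ 2) := mul_le_mul_of_nonneg_left e3 (by positivity)
          _ = β * α ^ 2 * L ^ 2 / 2 := by ring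
      linarith [hd1, e4]
    have hsum := Finset.sum_le_sum (fun idx (_ : idx ∈ (Finset.univ : Finset (Fin T → Fin n))) => hpt idx)
    have hexp : ∑ idx : Fin T → Fin n,
        (RS (w idx (t : ℕ)) - α * ⟪G (w idx (t : ℕ)), gi (idx t) (w idx (t : ℕ))⟫ + c0)
        = P (t : ℕ) - α * Ee (t : ℕ) + Ncard * c0 := by
      rw [Finset.sum_add_distrib, Finset.sum_sub_distrib, ← Finset.mul_sum, hkey t, hcardsum]
    rw [hexp] at hsum
    simp only [hP] at hsum ⊢
    linarith [hsum]
  -- telescoping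
  have htel : α * ∑ s ∈ Finset.range T, Ee s ≤ P 0 - P T + (T : ℝ) * (Ncard * c0) := by
    rw [Finset.mul_sum]
    calc ∑ s ∈ Finset.range T, α * Ee s
        ≤ ∑ s ∈ Finset.range T, (P s - P (s + 1) + Ncard * c0) := by
          refine Finset.sum_le_sum (fun s hs => ?_)
          exact hstep ⟨s, Finset.mem_range.mp hs⟩
      _ = (P 0 - P T) + (T : ℝ) * (Ncard * c0) := by
          rw [Finset.sum_add_distrib, Finset.sum_range_sub' P, Finset.sum_const,
            Finset.card_range, nsmul_eq_mul]
  -- bounds at time T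
  have hET1 : Ee T ≤ 2 * β * (P T - Ncard * RS wstar) := by
    simp only [hE, hP]
    calc ∑ idx : Fin T → Fin n, ‖G (w idx T)‖ ^ 2
        ≤ ∑ idx : Fin T → Fin n, (2 * β * (RS (w idx T) - RS wstar)) :=
          Finset.sum_le_sum (fun idx _ => hPL (w idx T))
      _ = 2 * β * ((∑ idx : Fin T → Fin n, RS (w idx T)) - Ncard * RS wstar) := by
          rw [← Finset.mul_sum, Finset.sum_sub_distrib, hcardsum]
  have hET2 : Ee T ≤ Ncard * L ^ 2 := by
    simp only [hE]
    rw [← hcardsum (L ^ 2)]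
    exact Finset.sum_le_sum (fun idx _ => pow_le_pow_left₀ (norm_nonneg _) (hGnorm _) 2)
  have hPT : Ncard * RS wstar ≤ P T := by
    simp only [hP]
    rw [← hcardsum (RS wstar)]
    exact Finset.sum_le_sum (fun idx _ => hwstar (w idx T))
  -- positivity of α'
  set α' : ℝ := α - α ^ 2 / 2 with hα'
  have hα'pos : 0 < α' := by
    rw [hα']
    have h1 : 0 < α * (2 - α) := mul_pos hα0 (by linarith)
    have h2 : α - α ^ 2 / 2 = α * (2 - α) / 2 := by ring
    rw [h2]; linarith
  have hα'le : α' ≤ α := by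
    rw [hα']
    have := sq_nonneg α
    linarith
  -- bound on the last term
  have hlast : α' * Ee T ≤ (P T - Ncard * RS wstar) + Ncard * c0 := by
    set X : ℝ := P T - Ncard * RS wstar with hX
    have hXnn : 0 ≤ X := by rw [hX]; linarith [hPT]
    have hm2 : Ee T * Ee T ≤ (2 * β * X) * (Ncard * L ^ 2) :=
      mul_le_mul hET1 hET2 (hEnn T) (mul_nonneg (by positivity) hXnn)
    have s1 : α' ^ 2 ≤ α ^ 2 := pow_le_pow_left₀ hα'pos.le hα'le 2
    have s4 : (α' * Ee T) ^ 2 ≤ α ^ 2 * ((2 * β * X) * (Ncard * L ^ 2)) := by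
      have : (α' * Ee T) ^ 2 = α' ^ 2 * (Ee T * Ee T) := by ring
      rw [this]
      exact mul_le_mul s1 hm2 (mul_self_nonneg _) (by positivity)
    have s5 : α ^ 2 * ((2 * β * X) * (Ncard * L ^ 2)) = 4 * X * (Ncard * c0) := by
      rw [hc0]; ring
    have s6 : 4 * X * (Ncard * c0) ≤ (X + Ncard * c0) ^ 2 := by
      have hr : (X + Ncard * c0) ^ 2 - 4 * X * (Ncard * c0) = (X - Ncard * c0) ^ 2 := by ring
      linarith [sq_nonneg (X - Ncard * c0), hr]
    have hsq : (α' * Ee T) ^ 2 ≤ (X + Ncard * c0) ^ 2 := by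
      calc (α' * Ee T) ^ 2 ≤ 4 * X * (Ncard * c0) := by rw [← s5]; exact s4
        _ ≤ (X + Ncard * c0) ^ 2 := s6
    have hann : 0 ≤ α' * Ee T := mul_nonneg hα'pos.le (hEnn T)
    have hbnn : 0 ≤ X + Ncard * c0 := by positivity
    exact (pow_le_pow_iff_left₀ hann hbnn two_ne_zero).mp hsq
  -- total bound
  have hmin := Finset.exists_min_image (Finset.range (T + 1)) Ee
    ⟨0, Finset.mem_range.mpr (Nat.succ_pos T)⟩
  obtain ⟨t₀, ht₀, ht₀min⟩ := hmin
  have ht₀T : t₀ ≤ T := Nat.lt_succ_iff.mp (Finset.mem_range.mp ht₀)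
  have hmin' : ((T : ℝ) + 1) * Ee t₀ ≤ ∑ s ∈ Finset.range (T + 1), Ee s := by
    have h := Finset.card_nsmul_le_sum (Finset.range (T + 1)) Ee (Ee t₀)
      (fun s hs => ht₀min s hs)
    rw [Finset.card_range, nsmul_eq_mul] at h
    push_cast at h ⊢
    linarith [h]
  have htotal : α' * ∑ s ∈ Finset.range (T + 1), Ee s
      ≤ (P 0 - Ncard * RS wstar) + ((T : ℝ) + 1) * (Ncard * c0) := by
    rw [Finset.sum_range_succ, mul_add]
    have h1 : α' * ∑ s ∈ Finset.range T, Ee s ≤ α * ∑ s ∈ Finset.range T, Ee s :=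
      mul_le_mul_of_nonneg_right hα'le
        (Finset.sum_nonneg (fun s _ => hEnn s))
    have hT0 : (0:ℝ) ≤ (T : ℝ) := Nat.cast_nonneg T
    linarith [h1, htel, hlast]
  have hkey2 : ((T : ℝ) + 1) * α' * Ee t₀
      ≤ (P 0 - Ncard * RS wstar) + ((T : ℝ) + 1) * (Ncard * c0) := by
    calc ((T : ℝ) + 1) * α' * Ee t₀ = α' * (((T : ℝ) + 1) * Ee t₀) := by ring
      _ ≤ α' * ∑ s ∈ Finset.range (T + 1), Ee s :=
          mul_le_mul_of_nonneg_left hmin' hα'pos.le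
      _ ≤ _ := htotal
  -- conclude
  refine ⟨t₀, ht₀T, ?_⟩
  have hLHS : (∑ idx : Fin T → Fin n, ‖gradient RS (w idx t₀)‖ ^ 2) = Ee t₀ := by
    simp only [hE]
    exact Finset.sum_congr rfl (fun idx _ => by rw [hgradRS])
  have hSW : (∑ idx : Fin T → Fin n, (RS (w idx 0) - RS wstar))
      = P 0 - Ncard * RS wstar := by
    rw [Finset.sum_sub_distrib, hcardsum]
  rw [hLHS, hSW]
  have hTpos : (0:ℝ) < (T : ℝ) + 1 := by positivity
  have hRHS : (P 0 - Ncard * RS wstar) / Ncard / (((T : ℝ) + 1) * α')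
      + β * α ^ 2 * L ^ 2 / (2 * α - α ^ 2)
      = ((P 0 - Ncard * RS wstar) + ((T : ℝ) + 1) * (Ncard * c0))
        / (((T : ℝ) + 1) * α' * Ncard) := by
    have h2a : 2 * α - α ^ 2 = 2 * α' := by rw [hα']; ring
    rw [h2a, hc0]
    field_simp
  rw [hRHS, div_le_div_iff₀ hNpos (by positivity)]
  calc Ee t₀ * (((T : ℝ) + 1) * α' * Ncard)
      = (((T : ℝ) + 1) * α' * Ee t₀) * Ncard := by ring
    _ ≤ ((P 0 - Ncard * RS wstar) + ((T : ℝ) + 1) * (Ncard * c0)) * Ncard :=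
        mul_le_mul_of_nonneg_right hkey2 hNpos.le
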